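/- non(𝒩) ≥ 𝔡₂: every non-null set X ⊆ 2^ω is R₂-dominating, i.e., for every g ∈ 2^ω there is x ∈ X with g↾I_n ≠ x↾I_n for all but finitely many n; consequently the uniformity of the null ideal is at least the R₂-domination number. -/

import Mathlib

open MeasureTheory

/- non(𝒩) ≥ 𝔡₂.  With (Iₙ) the interval partition of ω, |Iₙ| = 2^(n+1), and
   g R₂ x iff g↾Iₙ ≠ x↾Iₙ for all but finitely many n:  every non-null set
   X ⊆ 2^ω (w.r.t. the uniform measure μ, characterized by its cylinder values)
   is R₂-dominating, and consequently 𝔡₂ ≤ non(𝒩), i.e. the least size of an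
   R₂-dominating family is at most the least size of a non-null set. -/

def intervalStart (n : ℕ) : ℕ := 2 ^ (n + 1) - 2

def agreesOnBlock (f g : ℕ → Bool) (n : ℕ) : Prop :=
  ∀ k ∈ Set.Ico (intervalStart n) (intervalStart n + 2 ^ (n + 1)), f k = g k

/-- The relation R₂: eventually, `g` and `x` differ on every interval `Iₙ`. -/
def R2 (g x : ℕ → Bool) : Prop :=
  ∀ᶠ n in Filter.atTop, ¬ agreesOnBlock g x n

lemma block_measure_le (μ : Measure (ℕ → Bool))
    (hcyl : ∀ (n : ℕ) (s : ℕ → Bool),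
      μ {f : ℕ → Bool | ∀ i < n, f i = s i} = (1 / 2 : ENNReal) ^ n)
    (g : ℕ → Bool) (n : ℕ) :
    μ {x | agreesOnBlock g x n} ≤ (1 / 2 : ENNReal) ^ (2 ^ (n + 1)) := by
  set s := intervalStart n with hs
  set L := 2 ^ (n + 1) with hL
  have hcover : {x | agreesOnBlock g x n} ⊆
      ⋃ t : Fin s → Bool, {x : ℕ → Bool | ∀ i < s + L,
        x i = if h : i < s then t ⟨i, h⟩ else g i} := by
    intro x hx
    refine Set.mem_iUnion.2 ⟨fun i => x i.1, fun i hi => ?_⟩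
    split
    · rfl
    · next h => exact (hx i ⟨Nat.le_of_not_lt h, hi⟩).symm
  have hbound : μ {x | agreesOnBlock g x n} ≤
      ∑' _ : Fin s → Bool, (1 / 2 : ENNReal) ^ (s + L) := by
    refine (measure_mono hcover).trans ((measure_iUnion_le _).trans ?_)
    refine ENNReal.tsum_le_tsum fun t => ?_
    exact le_of_eq (hcyl (s + L) (fun i => if h : i < s then t ⟨i, h⟩ else g i))
  have hcard : (∑' _ : Fin s → Bool, (1 / 2 : ENNReal) ^ (s + L)) =
      (2 : ENNReal) ^ s * (1 / 2 : ENNReal) ^ (s + L) := by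
    rw [tsum_eq_sum (s := Finset.univ) (by simp), Finset.sum_const, nsmul_eq_mul,
      Finset.card_univ, Fintype.card_fun]
    simp
  have hkey : (2 : ENNReal) ^ s * (1 / 2 : ENNReal) ^ (s + L) =
      (1 / 2 : ENNReal) ^ L := by
    rw [pow_add, ← mul_assoc, ← mul_pow, one_div,
      ENNReal.mul_inv_cancel two_ne_zero ENNReal.ofNat_ne_top, one_pow, one_mul]
  calc μ {x | agreesOnBlock g x n} ≤ _ := hbound
    _ = _ := hcard
    _ = _ := hkey

theorem nonNull_ge_d2
    (μ : Measure (ℕ → Bool))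
    (hcyl : ∀ (n : ℕ) (s : ℕ → Bool),
      μ {f : ℕ → Bool | ∀ i < n, f i = s i} = (1 / 2 : ENNReal) ^ n) :
    (∀ X : Set (ℕ → Bool), μ X ≠ 0 → ∀ g : ℕ → Bool, ∃ x ∈ X, R2 g x) ∧
    sInf {c : Cardinal | ∃ X : Set (ℕ → Bool),
        Cardinal.mk X = c ∧ ∀ g : ℕ → Bool, ∃ x ∈ X, R2 g x}
      ≤ sInf {c : Cardinal | ∃ X : Set (ℕ → Bool),
        Cardinal.mk X = c ∧ μ X ≠ 0} := by
  have hdom : ∀ X : Set (ℕ → Bool), μ X ≠ 0 → ∀ g : ℕ → Bool, ∃ x ∈ X, R2 g x := by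
    intro X hX g
    by_contra h
    push_neg at h
    set A : ℕ → Set (ℕ → Bool) := fun n => {x | agreesOnBlock g x n} with hA
    have hsum : (∑' n, μ (A n)) ≠ ⊤ := by
      have h1 : (∑' n, μ (A n)) ≤ ∑' n : ℕ, (1 / 2 : ENNReal) ^ n := by
        refine ENNReal.tsum_le_tsum fun n => (block_measure_le μ hcyl g n).trans ?_
        refine pow_le_pow_of_le_one zero_le (by norm_num) ?_
        exact (Nat.lt_two_pow_self (n := n)).le.trans (Nat.pow_le_pow_right (by norm_num) n.le_succ)
      refine ne_of_lt (lt_of_le_of_lt h1 ?_)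
      rw [ENNReal.tsum_geometric]
      simp [ENNReal.sub_half]
    have hlimsup : μ (Filter.limsup A Filter.atTop) = 0 :=
      measure_limsup_atTop_eq_zero hsum
    have hXsub : X ⊆ Filter.limsup A Filter.atTop := by
      intro x hx
      rw [Filter.mem_limsup_iff_frequently_mem]
      have := h x hx
      rw [R2, Filter.not_eventually] at this
      simpa [hA] using this
    exact hX (le_antisymm (hlimsup ▸ measure_mono hXsub) zero_le)
  refine ⟨hdom, ?_⟩
  have hne : {c : Cardinal | ∃ X : Set (ℕ → Bool), Cardinal.mk X = c ∧ μ X ≠ 0}.Nonempty := by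
    refine ⟨Cardinal.mk (Set.univ : Set (ℕ → Bool)), Set.univ, rfl, ?_⟩
    have huniv : {f : ℕ → Bool | ∀ i < 0, f i = true} = Set.univ := by
      ext f; simp
    have h1 : μ Set.univ = 1 := by rw [← huniv]; simpa using hcyl 0 (fun _ => true)
    simp [h1]
  refine le_csInf hne ?_
  rintro c ⟨X, rfl, hX⟩
  exact csInf_le' ⟨X, rfl, hdom X hX⟩
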